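/- In the algebra of differential functions in one variable u (localized at u' and D(u')), the 2×2-style factorization holds: the rational pseudodifferential operator H = u'∂^{-1}∘u' + a·∂^{-1}∘u'∂^{-1}∘u'∂^{-1} equals A∘B^{-1}, where A = (∂² − 2(u''/u')∂ + (u''/u')' + a) ∘ (1/D(u')) ∘ ∂ − u', B = ∂∘(1/u')∘∂∘(1/u')∘∂∘(1/D(u'))∘∂, and D(u') = ((1/u')(u''/u')')'. In particular, for a = 0 this reduces to the operator identity u'∂^{-1}∘u' = ( (∂² − 2(u''/u')∂ + (u''/u')')∘(1/D(u'))∘∂ − u' ) ∘ B^{-1}. -/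

import Mathlib

noncomputable section

/-- The integer binomial coefficient `C(p, k)` for `p ∈ ℤ`, `k ∈ ℕ`
(the integer division is exact). -/
def zchoose (p : ℤ) (k : ℕ) : ℤ :=
  (∏ i ∈ Finset.range k, (p - (i : ℤ))) / (k.factorial : ℤ)

theorem descPoch_eval (p : ℤ) (k : ℕ) :
    (descPochhammer ℤ k).eval p = ∏ i ∈ Finset.range k, (p - (i : ℤ)) := by
  induction k with
  | zero => simp
  | succ k ih => rw [descPochhammer_succ_eval, ih, Finset.prod_range_succ]

theorem zchoose_eq (p : ℤ) (k : ℕ) : zchoose p k = Ring.choose p k := by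
  have h := Ring.descPochhammer_eq_factorial_smul_choose p k
  rw [← Polynomial.eval_eq_smeval] at h
  rw [zchoose, ← descPoch_eval, h, nsmul_eq_mul]
  exact Int.mul_ediv_cancel_left _ (by exact_mod_cast Nat.factorial_ne_zero k)

theorem zchoose_vandermonde (m p : ℤ) (t : ℕ) :
    zchoose (m + p) t = ∑ k ∈ Finset.range (t+1), zchoose m k * zchoose p (t - k) := by
  simp only [zchoose_eq]
  rw [Ring.add_choose_eq t (Commute.all m p),
    Finset.Nat.sum_antidiagonal_eq_sum_range_succ_mk]

theorem zchoose_key (n p : ℤ) (j t : ℕ) :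
    zchoose n j * zchoose (n - j + p) t
      = ∑ k ∈ Finset.range (t+1), ((j+k).choose j : ℤ) * (zchoose n (j+k) * zchoose p (t - k)) := by
  have h : ∀ k : ℕ, ((j+k).choose j : ℤ) * zchoose n (j+k) = zchoose n j * zchoose (n - j) k := by
    intro k
    have := Ring.choose_smul_choose n (n := j+k) (k := j) (Nat.le_add_right j k)
    simp only [Nat.add_sub_cancel_left] at this
    simp only [zchoose_eq, nsmul_eq_mul] at *
    exact this
  calc zchoose n j * zchoose (n - j + p) t
      = ∑ k ∈ Finset.range (t+1), (zchoose n j * zchoose (n-j) k) * zchoose p (t - k) := by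
        rw [zchoose_vandermonde, Finset.mul_sum]; simp [mul_assoc]
    _ = _ := by
        refine Finset.sum_congr rfl fun k _ => ?_
        rw [← h, mul_assoc]

variable {K : Type*} [Field K]

/-- Multiplication of pseudodifferential operators over a differential field `(K, d)`,
an operator `Σ_n a_n ∂^n` being presented by its coefficient function `n ↦ a_n`. -/
def pdoMul (d : K → K) (A B : ℤ → K) (r : ℤ) : K :=
  ∑ᶠ n : ℤ, ∑ᶠ j : ℕ, (zchoose n j) • (A n * d^[j] (B (r - n + j)))

/-- The pseudodifferential operator `a ∂^n`. -/
def pdoSingle (n : ℤ) (a : K) : ℤ → K := fun m => if m = n then a else 0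

namespace Pdo18

variable {K : Type*} [Field K]

structure Der (K : Type*) [Field K] where
  d : K → K
  d_add : ∀ a b : K, d (a + b) = d a + d b
  d_mul : ∀ a b : K, d (a * b) = d a * b + a * d b

variable (E : Der K)

theorem d_zero : E.d 0 = 0 := by
  have := E.d_add 0 0; simpa using this

theorem d_one : E.d 1 = 0 := by
  have := E.d_mul 1 1; simpa using this

theorem d_neg (a : K) : E.d (-a) = - E.d a := by
  have := E.d_add a (-a); simp [d_zero] at this; linear_combination -this

theorem d_smul (c : ℤ) (a : K) : E.d (c • a) = c • E.d a := by
  induction c using Int.induction_on with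
  | zero => simp [d_zero]
  | succ n ihn => simp only [add_smul, one_smul, E.d_add, ihn]
  | pred n ihn =>
    have h : ((-(n:ℤ) - 1) • a) = (-(n:ℤ)) • a + -a := by
      rw [sub_smul]; simp [sub_eq_add_neg]
    rw [h, E.d_add, ihn, d_neg, sub_smul]; simp [sub_eq_add_neg]

theorem iter_zero (j : ℕ) : E.d^[j] 0 = 0 := by
  induction j with
  | zero => rfl
  | succ j ih => rw [Function.iterate_succ_apply', ih, d_zero]

theorem iter_one (j : ℕ) (hj : j ≠ 0) : E.d^[j] (1 : K) = 0 := by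
  obtain ⟨j, rfl⟩ := Nat.exists_eq_succ_of_ne_zero hj
  rw [Function.iterate_succ_apply, d_one, iter_zero]

theorem iter_add (j : ℕ) (a b : K) : E.d^[j] (a + b) = E.d^[j] a + E.d^[j] b := by
  induction j generalizing a b with
  | zero => rfl
  | succ j ih =>
    rw [Function.iterate_succ_apply, Function.iterate_succ_apply,
      Function.iterate_succ_apply, E.d_add, ih]

theorem iter_smul (j : ℕ) (c : ℤ) (a : K) : E.d^[j] (c • a) = c • E.d^[j] a := by
  induction j generalizing a with
  | zero => rfl
  | succ j ih => rw [Function.iterate_succ_apply, d_smul, ih, ← Function.iterate_succ_apply]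

theorem leibniz (k : ℕ) (a b : K) :
    E.d^[k] (a * b) = ∑ s ∈ Finset.range (k+1), (k.choose s) • (E.d^[s] a * E.d^[k-s] b) := by
  induction k generalizing a b with
  | zero => simp
  | succ k ih =>
    rw [Function.iterate_succ_apply, E.d_mul, iter_add, ih, ih]
    have e1 : ∀ s, s ∈ Finset.range (k+1) →
        (k.choose s) • (E.d^[s] (E.d a) * E.d^[k-s] b)
          = (k.choose s) • (E.d^[s+1] a * E.d^[k+1-(s+1)] b) := by
      intro s hs
      have h : k + 1 - (s+1) = k - s := by omega
      rw [h, ← Function.iterate_succ_apply]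
    have e2 : ∀ s, s ∈ Finset.range (k+1) →
        (k.choose s) • (E.d^[s] a * E.d^[k-s] (E.d b))
          = (k.choose s) • (E.d^[s] a * E.d^[k+1-s] b) := by
      intro s hs
      simp only [Finset.mem_range] at hs
      have h : k + 1 - s = (k - s) + 1 := by omega
      rw [h, ← Function.iterate_succ_apply]
    rw [Finset.sum_congr rfl e1, Finset.sum_congr rfl e2]
    rw [Finset.sum_range_succ' (fun s => ((k+1).choose s) • (E.d^[s] a * E.d^[k+1-s] b)) (k+1)]
    simp only [Nat.choose_succ_succ, add_smul, Finset.sum_add_distrib]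
    rw [Nat.choose_zero_right, one_smul, Nat.sub_zero, Function.iterate_zero_apply]
    have e3 : ∑ s ∈ Finset.range (k+1), (k.choose (s+1)) • (E.d^[s+1] a * E.d^[k+1-(s+1)] b)
        = ∑ s ∈ Finset.range (k+1), (k.choose s) • (E.d^[s] a * E.d^[k+1-s] b)
          - 1 • (E.d^[0] a * E.d^[k+1] b) := by
      rw [Finset.sum_range_succ (fun s => (k.choose (s+1)) • (E.d^[s+1] a * E.d^[k+1-(s+1)] b)) k,
        Nat.choose_succ_self, zero_smul, add_zero,
        Finset.sum_range_succ' (fun s => (k.choose s) • (E.d^[s] a * E.d^[k+1-s] b)) k]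
      simp
    rw [e3]
    simp only [Nat.succ_sub_succ_eq_sub, Function.iterate_zero_apply, one_smul]
    abel


theorem double_finsum_eq_sum {g : ℤ → ℕ → K} {s : Finset (ℤ × ℕ)}
    (h : ∀ n j, g n j ≠ 0 → (n, j) ∈ s) :
    (∑ᶠ n : ℤ, ∑ᶠ j : ℕ, g n j) = ∑ p ∈ s, g p.1 p.2 := by
  classical
  have h1 : ∀ n : ℤ, (∑ᶠ j : ℕ, g n j) = ∑ j ∈ s.image Prod.snd, g n j := by
    intro n
    refine finsum_eq_finset_sum_of_support_subset _ ?_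
    intro j hj
    simp only [Function.mem_support] at hj
    exact Finset.mem_coe.mpr (Finset.mem_image.mpr ⟨(n, j), h n j hj, rfl⟩)
  rw [finsum_congr h1]
  have h2 : (∑ᶠ n : ℤ, ∑ j ∈ s.image Prod.snd, g n j)
      = ∑ n ∈ s.image Prod.fst, ∑ j ∈ s.image Prod.snd, g n j := by
    refine finsum_eq_finset_sum_of_support_subset _ ?_
    intro n hn
    simp only [Function.mem_support] at hn
    obtain ⟨j, _, hj⟩ := Finset.exists_ne_zero_of_sum_ne_zero hn
    exact Finset.mem_coe.mpr (Finset.mem_image.mpr ⟨(n, j), h n j hj, rfl⟩)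
  rw [h2, ← Finset.sum_product']
  refine (Finset.sum_subset ?_ ?_).symm
  · intro p hp
    exact Finset.mem_product.mpr ⟨Finset.mem_image_of_mem _ hp, Finset.mem_image_of_mem _ hp⟩
  · intro p _ hp
    by_contra hne
    exact hp (h p.1 p.2 hne)

def OrdLE (N : ℤ) (A : ℤ → K) : Prop := ∀ n, N < n → A n = 0


theorem term_ne_zero_imp {A B : ℤ → K} {NA NB : ℤ} (hA : OrdLE NA A) (hB : OrdLE NB B)
    {r n : ℤ} {j : ℕ}
    (h : zchoose n j • (A n * E.d^[j] (B (r - n + j))) ≠ 0) :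
    n ≤ NA ∧ (j : ℤ) ≤ NB + n - r := by
  constructor
  · by_contra hn
    rw [hA n (by omega), zero_mul, smul_zero] at h
    exact h rfl
  · by_contra hj
    rw [hB (r - n + j) (by omega), iter_zero, mul_zero, smul_zero] at h
    exact h rfl

theorem pdoMul_eq_sum {A B : ℤ → K} {NA NB : ℤ} (hA : OrdLE NA A) (hB : OrdLE NB B)
    (r : ℤ) {s : Finset (ℤ × ℕ)}
    (hs : ∀ (n : ℤ) (j : ℕ), n ≤ NA → (j : ℤ) ≤ NB + n - r → (n, j) ∈ s) :
    pdoMul E.d A B r = ∑ p ∈ s, zchoose p.1 p.2 • (A p.1 * E.d^[p.2] (B (r - p.1 + p.2))) := by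
  exact double_finsum_eq_sum fun n j h => hs n j (term_ne_zero_imp E hA hB h).1
    (term_ne_zero_imp E hA hB h).2

theorem ordLE_pdoMul {A B : ℤ → K} {NA NB : ℤ} (hA : OrdLE NA A) (hB : OrdLE NB B) :
    OrdLE (NA + NB) (pdoMul E.d A B) := by
  intro r hr
  rw [pdoMul_eq_sum E hA hB r (s := ∅) (fun (n : ℤ) (j : ℕ) h1 h2 => by exfalso; omega)]
  simp

theorem ordLE_mono {A : ℤ → K} {N N' : ℤ} (h : N ≤ N') (hA : OrdLE N A) : OrdLE N' A :=
  fun n hn => hA n (by omega)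

theorem ordLE_single (n : ℤ) (a : K) : OrdLE n (pdoSingle n a) := by
  intro m hm
  simp [pdoSingle]; omega

def box (a b : ℤ) (J : ℕ) : Finset (ℤ × ℕ) := Finset.Icc a b ×ˢ Finset.range J

theorem mem_box {a b : ℤ} {J : ℕ} {p : ℤ × ℕ} :
    p ∈ box a b J ↔ a ≤ p.1 ∧ p.1 ≤ b ∧ p.2 < J := by
  simp [box, Finset.mem_product, Finset.mem_Icc, Finset.mem_range, and_assoc]

theorem pdoMul_add_left {A A' B : ℤ → K} {NA NA' NB : ℤ}
    (hA : OrdLE NA A) (hA' : OrdLE NA' A') (hB : OrdLE NB B) :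
    pdoMul E.d (A + A') B = pdoMul E.d A B + pdoMul E.d A' B := by
  funext r
  have hAA : OrdLE (max NA NA') (A + A') := by
    intro n hn
    simp only [Pi.add_apply, hA n (by omega), hA' n (by omega), add_zero]
  have hmem : ∀ (n : ℤ) (j : ℕ), n ≤ max NA NA' → (j : ℤ) ≤ NB + n - r →
      (n, j) ∈ box (r - NB) (max NA NA') ((max NA NA' + NB - r).toNat + 1) := by
    intro n j h1 h2
    rw [mem_box]
    refine ⟨by omega, by omega, by omega⟩
  rw [Pi.add_apply,
    pdoMul_eq_sum E hAA hB r hmem,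
    pdoMul_eq_sum E (ordLE_mono (le_max_left NA NA') hA) hB r hmem,
    pdoMul_eq_sum E (ordLE_mono (le_max_right NA NA') hA') hB r hmem,
    ← Finset.sum_add_distrib]
  refine Finset.sum_congr rfl fun p _ => ?_
  simp only [Pi.add_apply, add_mul, smul_add]

theorem pdoMul_add_right {A B B' : ℤ → K} {NA NB NB' : ℤ}
    (hA : OrdLE NA A) (hB : OrdLE NB B) (hB' : OrdLE NB' B') :
    pdoMul E.d A (B + B') = pdoMul E.d A B + pdoMul E.d A B' := by
  funext r
  have hBB : OrdLE (max NB NB') (B + B') := by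
    intro n hn
    simp only [Pi.add_apply, hB n (by omega), hB' n (by omega), add_zero]
  have hmem : ∀ (n : ℤ) (j : ℕ), n ≤ NA → (j : ℤ) ≤ max NB NB' + n - r →
      (n, j) ∈ box (r - max NB NB') NA ((NA + max NB NB' - r).toNat + 1) := by
    intro n j h1 h2
    rw [mem_box]
    refine ⟨by omega, by omega, by omega⟩
  rw [Pi.add_apply,
    pdoMul_eq_sum E hA hBB r hmem,
    pdoMul_eq_sum E hA (ordLE_mono (le_max_left NB NB') hB) r
      (fun n j h1 h2 => hmem n j h1 (by omega)),
    pdoMul_eq_sum E hA (ordLE_mono (le_max_right NB NB') hB') r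
      (fun n j h1 h2 => hmem n j h1 (by omega)),
    ← Finset.sum_add_distrib]
  refine Finset.sum_congr rfl fun p _ => ?_
  simp only [Pi.add_apply, iter_add, mul_add, smul_add]

theorem pdoMul_zero_left (B : ℤ → K) : pdoMul E.d 0 B = 0 := by
  funext r
  simp [pdoMul]

theorem pdoMul_zero_right (A : ℤ → K) : pdoMul E.d A 0 = 0 := by
  funext r
  simp [pdoMul, iter_zero]

theorem pdoMul_one_left (A : ℤ → K) : pdoMul E.d (pdoSingle 0 1) A = A := by
  funext r
  rw [pdoMul, finsum_eq_single _ (0 : ℤ)]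
  · rw [finsum_eq_single _ (0 : ℕ)]
    · simp [pdoSingle, zchoose]
    · intro j hj
      have hz : zchoose (0 : ℤ) j = 0 := by
        obtain ⟨j', rfl⟩ := Nat.exists_eq_succ_of_ne_zero hj
        simp [zchoose, Finset.prod_range_succ']
      rw [hz, zero_smul]
  · intro n hn
    have : pdoSingle (0:ℤ) (1:K) n = 0 := by simp [pdoSingle, hn]
    simp [this]

theorem pdoMul_one_right (A : ℤ → K) : pdoMul E.d A (pdoSingle 0 1) = A := by
  funext r
  rw [pdoMul, finsum_eq_single _ r]
  · rw [finsum_eq_single _ (0 : ℕ)]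
    · simp [pdoSingle, zchoose]
    · intro j hj
      have : pdoSingle (0:ℤ) (1:K) (r - r + j) = if (j:ℤ) = 0 then 1 else 0 := by
        simp [pdoSingle]
      rw [this, if_neg (by exact_mod_cast hj), iter_zero, mul_zero, smul_zero]
  · intro n hn
    rw [finsum_eq_zero_of_forall_eq_zero]
    intro j
    rcases eq_or_ne ((r - n + j : ℤ)) 0 with h | h
    · have : A n * E.d^[j] (pdoSingle (0:ℤ) (1:K) (r - n + j)) = A n * E.d^[j] 1 := by
        rw [h]; simp [pdoSingle]
      rw [this, iter_one _ _ (by omega), mul_zero, smul_zero]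
    · have : pdoSingle (0:ℤ) (1:K) (r - n + j) = 0 := by simp [pdoSingle, h]
      rw [this, iter_zero, mul_zero, smul_zero]

theorem zchoose_zero_succ (j : ℕ) : zchoose 0 (j + 1) = 0 := by
  simp [zchoose, Finset.prod_range_succ']

theorem zchoose_zero_right (p : ℤ) : zchoose p 0 = 1 := by simp [zchoose]

theorem zchoose_one_one : zchoose 1 1 = 1 := by simp [zchoose]

theorem zchoose_one_ge_two {j : ℕ} (hj : 2 ≤ j) : zchoose 1 j = 0 := by
  rw [zchoose, Finset.prod_eq_zero (i := 1) (by simp; omega) (by simp)]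
  simp

theorem pdoMul_smul_left (f : K) (X : ℤ → K) :
    pdoMul E.d (pdoSingle 0 f) X = f • X := by
  funext r
  rw [pdoMul, finsum_eq_single _ (0 : ℤ)]
  · rw [finsum_eq_single _ (0 : ℕ)]
    · simp [pdoSingle, zchoose_zero_right]
    · intro j hj
      obtain ⟨j', rfl⟩ := Nat.exists_eq_succ_of_ne_zero hj
      rw [zchoose_zero_succ, zero_smul]
  · intro n hn
    have : pdoSingle (0:ℤ) f n = 0 := by simp [pdoSingle, hn]
    simp [this]

theorem smul_single (f a : K) (n : ℤ) : f • pdoSingle n a = pdoSingle n (f * a) := by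
  funext m
  simp only [Pi.smul_apply, pdoSingle, smul_eq_mul]
  split <;> simp

theorem single_mul_single_left (f g : K) (n : ℤ) :
    pdoMul E.d (pdoSingle 0 f) (pdoSingle n g) = pdoSingle n (f * g) := by
  rw [pdoMul_smul_left, smul_single]

theorem dop_mul_m (f : K) :
    pdoMul E.d (pdoSingle 1 1) (pdoSingle 0 f)
      = pdoSingle 1 f + pdoSingle 0 (E.d f) := by
  funext r
  have houter : ∀ n : ℤ, n ≠ 1 →
      (∑ᶠ j : ℕ, zchoose n j • (pdoSingle 1 (1:K) n * E.d^[j] (pdoSingle 0 f (r - n + j)))) = 0 := by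
    intro n hn
    have : pdoSingle 1 (1:K) n = 0 := by simp [pdoSingle, hn]
    simp [this]
  rw [pdoMul, finsum_eq_single _ (1 : ℤ) houter]
  have hone : pdoSingle 1 (1:K) 1 = 1 := by simp [pdoSingle]
  rcases eq_or_ne r 1 with rfl | hr1
  · rw [finsum_eq_single _ (0 : ℕ)]
    · simp [pdoSingle, zchoose_zero_right]
    · intro j hj
      have : pdoSingle (0:ℤ) f (1 - 1 + j) = 0 := by
        simp [pdoSingle]; omega
      rw [this, iter_zero, mul_zero, smul_zero]
  rcases eq_or_ne r 0 with rfl | hr0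
  · rw [finsum_eq_single _ (1 : ℕ)]
    · have harg : pdoSingle (0:ℤ) f (0 - 1 + ((1:ℕ):ℤ)) = f := by norm_num [pdoSingle]
      rw [harg, hone, zchoose_one_one]
      simp [pdoSingle]
    · intro j hj
      rcases eq_or_ne ((0 : ℤ) - 1 + j) 0 with h | h
      · exact absurd (by omega : j = 1) hj
      · have : pdoSingle (0:ℤ) f (0 - 1 + j) = 0 := by
          simp only [pdoSingle, if_neg h]
        rw [this, iter_zero, mul_zero, smul_zero]
  · rw [finsum_eq_zero_of_forall_eq_zero, eq_comm]
    · simp [pdoSingle, hr1, hr0]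
    · intro j
      rcases eq_or_ne ((r : ℤ) - 1 + j) 0 with h | h
      · have hj2 : 2 ≤ j := by omega
        rw [zchoose_one_ge_two hj2, zero_smul]
      · have : pdoSingle (0:ℤ) f (r - 1 + j) = 0 := by simp [pdoSingle, h]
        rw [this, iter_zero, mul_zero, smul_zero]

theorem dop_mul_dinv :
    pdoMul E.d (pdoSingle 1 (1:K)) (pdoSingle (-1) 1) = pdoSingle 0 1 := by
  funext r
  have houter : ∀ n : ℤ, n ≠ 1 →
      (∑ᶠ j : ℕ, zchoose n j • (pdoSingle 1 (1:K) n * E.d^[j] (pdoSingle (-1) (1:K) (r - n + j)))) = 0 := by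
    intro n hn
    have : pdoSingle 1 (1:K) n = 0 := by simp [pdoSingle, hn]
    simp [this]
  rw [pdoMul, finsum_eq_single _ (1 : ℤ) houter]
  have hone : pdoSingle 1 (1:K) 1 = 1 := by simp [pdoSingle]
  rcases eq_or_ne r 0 with rfl | hr0
  · rw [finsum_eq_single _ (0 : ℕ)]
    · norm_num [pdoSingle, zchoose_zero_right]
    · intro j hj
      have : pdoSingle (-1:ℤ) (1:K) (0 - 1 + j) = 0 := by
        simp [pdoSingle]; omega
      rw [this, iter_zero, mul_zero, smul_zero]
  · rw [finsum_eq_zero_of_forall_eq_zero, eq_comm]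
    · simp [pdoSingle, hr0]
    · intro j
      rcases eq_or_ne ((r : ℤ) - 1 + j) (-1) with h | h
      · have hj : j ≠ 0 := by omega
        rw [hone, one_mul]
        have : pdoSingle (-1:ℤ) (1:K) (r - 1 + j) = 1 := by simp [pdoSingle, h]
        rw [this, iter_one _ _ hj, smul_zero]
      · have : pdoSingle (-1:ℤ) (1:K) (r - 1 + j) = 0 := by simp [pdoSingle, h]
        rw [this, iter_zero, mul_zero, smul_zero]

theorem dinv_mul_dop :
    pdoMul E.d (pdoSingle (-1) (1:K)) (pdoSingle 1 1) = pdoSingle 0 1 := by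
  funext r
  have houter : ∀ n : ℤ, n ≠ -1 →
      (∑ᶠ j : ℕ, zchoose n j • (pdoSingle (-1) (1:K) n * E.d^[j] (pdoSingle 1 (1:K) (r - n + j)))) = 0 := by
    intro n hn
    have : pdoSingle (-1:ℤ) (1:K) n = 0 := by simp [pdoSingle, hn]
    simp [this]
  rw [pdoMul, finsum_eq_single _ (-1 : ℤ) houter]
  have hone : pdoSingle (-1:ℤ) (1:K) (-1) = 1 := by simp [pdoSingle]
  rcases eq_or_ne r 0 with rfl | hr0
  · rw [finsum_eq_single _ (0 : ℕ)]
    · norm_num [pdoSingle, zchoose_zero_right]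
    · intro j hj
      have : pdoSingle (1:ℤ) (1:K) (0 - -1 + j) = 0 := by
        simp [pdoSingle]; omega
      rw [this, iter_zero, mul_zero, smul_zero]
  · rw [finsum_eq_zero_of_forall_eq_zero, eq_comm]
    · simp [pdoSingle, hr0]
    · intro j
      rcases eq_or_ne ((r : ℤ) - -1 + j) 1 with h | h
      · have hj : j ≠ 0 := by omega
        rw [hone, one_mul]
        have : pdoSingle (1:ℤ) (1:K) (r - -1 + j) = 1 := by
          simp only [pdoSingle, if_pos h]
        rw [this, iter_one _ _ hj, smul_zero]
      · have : pdoSingle (1:ℤ) (1:K) (r - -1 + j) = 0 := by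
          simp only [pdoSingle, if_neg h]
        rw [this, iter_zero, mul_zero, smul_zero]

/-- summing over a shifted interval -/
theorem sum_Icc_shift {M : Type*} [AddCommMonoid M] (j t : ℕ) (f : ℕ → M) :
    ∑ k ∈ Finset.Icc j (j + t), f k = ∑ k ∈ Finset.range (t + 1), f (j + k) := by
  refine Finset.sum_bij' (fun k _ => k - j) (fun k _ => j + k) ?_ ?_ ?_ ?_ ?_
  · intro a ha; simp only [Finset.mem_Icc] at ha; simp only [Finset.mem_range]; omega
  · intro a ha; simp only [Finset.mem_range] at ha; simp only [Finset.mem_Icc]; omega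
  · intro a ha; simp only [Finset.mem_Icc] at ha; omega
  · intro a ha; simp only [Finset.mem_range] at ha; omega
  · intro a ha; simp only [Finset.mem_Icc] at ha; congr 1; omega

def Tt (E : Der K) (A B C : ℤ → K) (r n p : ℤ) (j i : ℕ) : K :=
  A n * E.d^[j] (B p) * E.d^[i] (C (r - n + j - p + i))

theorem T_ne_zero {A B C : ℤ → K} {NA NB NC : ℤ}
    (hA : OrdLE NA A) (hB : OrdLE NB B) (hC : OrdLE NC C) {r n p : ℤ} {j i : ℕ}
    (h : Tt E A B C r n p j i ≠ 0) :
    n ≤ NA ∧ p ≤ NB ∧ r - n + j - p + i ≤ NC := by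
  rw [Tt] at h
  have h1 : A n ≠ 0 := fun hz => h (by rw [hz, zero_mul, zero_mul])
  have h2 : B p ≠ 0 := fun hz => h (by rw [hz, iter_zero, mul_zero, zero_mul])
  have h3 : C (r - n + j - p + i) ≠ 0 := fun hz => h (by rw [hz, iter_zero, mul_zero])
  have e1 : n ≤ NA := by by_contra hc; exact h1 (hA n (by omega))
  have e2 : p ≤ NB := by by_contra hc; exact h2 (hB p (by omega))
  have e3 : r - n + j - p + i ≤ NC := by by_contra hc; exact h3 (hC _ (by omega))
  exact ⟨e1, e2, e3⟩

theorem fiber {A B C : ℤ → K} {NA NB NC : ℤ}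
    (hA : OrdLE NA A) (hB : OrdLE NB B) (hC : OrdLE NC C) (r n p : ℤ) {J : ℕ}
    (hJ : NA + NB + NC - r < J) :
    ∑ ji ∈ Finset.range J ×ˢ Finset.range J,
      ((zchoose (n - ji.1 + p) ji.2 * zchoose n ji.1 : ℤ) : K) * Tt E A B C r n p ji.1 ji.2
    = ∑ kq ∈ Finset.range J ×ˢ Finset.range J, ∑ s ∈ Finset.range (kq.1 + 1),
      ((zchoose n kq.1 * zchoose p kq.2 * (kq.1.choose s) : ℤ) : K)
        * Tt E A B C r n p s ((kq.1 - s) + kq.2) := by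
  classical
  have hcoef : ∀ (j i : ℕ),
      ((zchoose (n - j + p) i * zchoose n j : ℤ) : K) * Tt E A B C r n p j i
      = ∑ k ∈ Finset.Icc j (j + i),
          ((zchoose n k * zchoose p ((i + j) - k) * (k.choose j) : ℤ) : K)
            * Tt E A B C r n p j i := by
    intro j i
    have hz : (zchoose (n - j + p) i * zchoose n j : ℤ)
        = ∑ k ∈ Finset.Icc j (j + i), zchoose n k * zchoose p ((i + j) - k) * (k.choose j) := by
      rw [sum_Icc_shift j i (fun k => zchoose n k * zchoose p ((i + j) - k) * (k.choose j)),
        mul_comm (zchoose (n - (j:ℤ) + p) i) (zchoose n j), zchoose_key n p j i]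
      refine Finset.sum_congr rfl fun k _ => ?_
      have e1 : (i + j) - (j + k) = i - k := by omega
      simp only [e1]
      ring
    rw [hz, Int.cast_sum, Finset.sum_mul]
  rw [Finset.sum_congr rfl (fun ji _ => hcoef ji.1 ji.2),
    ← Finset.sum_sigma (Finset.range J ×ˢ Finset.range J)
      (fun ji => Finset.Icc ji.1 (ji.1 + ji.2))
      (fun x => ((zchoose n x.2 * zchoose p ((x.1.2 + x.1.1) - x.2) * (x.2.choose x.1.1) : ℤ) : K)
        * Tt E A B C r n p x.1.1 x.1.2),
    ← Finset.sum_sigma (Finset.range J ×ˢ Finset.range J)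
      (fun kq => Finset.range (kq.1 + 1))
      (fun x => ((zchoose n x.1.1 * zchoose p x.1.2 * (x.1.1.choose x.2) : ℤ) : K)
        * Tt E A B C r n p x.2 ((x.1.1 - x.2) + x.1.2))]
  refine Finset.sum_bij_ne_zero (fun x _ _ => ⟨(x.2, (x.1.2 + x.1.1) - x.2), x.1.1⟩) ?_ ?_ ?_ ?_
  · -- membership
    rintro ⟨⟨j, i⟩, k⟩ h1 h2
    simp only [Finset.mem_sigma, Finset.mem_product, Finset.mem_range, Finset.mem_Icc] at h1 ⊢
    obtain ⟨⟨hj, hi⟩, hk1, hk2⟩ := h1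
    have hT : Tt E A B C r n p j i ≠ 0 := fun hzz => h2 (by dsimp only; rw [hzz, mul_zero])
    obtain ⟨ha1, ha2, hji⟩ := T_ne_zero E hA hB hC hT
    refine ⟨⟨by omega, by omega⟩, by omega⟩
  · -- injectivity
    rintro ⟨⟨j1, i1⟩, k1⟩ h11 h12 ⟨⟨j2, i2⟩, k2⟩ h21 h22 heq
    simp only [Finset.mem_sigma, Finset.mem_product, Finset.mem_range, Finset.mem_Icc] at h11 h21
    simp only [Sigma.mk.inj_iff, Prod.mk.injEq, heq_eq_eq] at heq
    obtain ⟨⟨e1, e2⟩, e3⟩ := heq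
    subst e1
    subst e3
    have : i1 = i2 := by omega
    subst this
    rfl
  · -- surjectivity
    rintro ⟨⟨k, q⟩, s⟩ hb hnz
    simp only [Finset.mem_sigma, Finset.mem_product, Finset.mem_range] at hb
    obtain ⟨⟨hk, hq⟩, hs⟩ := hb
    have hT : Tt E A B C r n p s ((k - s) + q) ≠ 0 := fun hzz => hnz (by dsimp only; rw [hzz, mul_zero])
    obtain ⟨ha1, ha2, hsi⟩ := T_ne_zero E hA hB hC hT
    have eq1 : k - s + q + s - k = q := by omega
    refine ⟨⟨(s, (k - s) + q), k⟩, ?_, ?_, ?_⟩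
    · simp only [Finset.mem_sigma, Finset.mem_product, Finset.mem_range, Finset.mem_Icc]
      refine ⟨⟨by omega, by omega⟩, by omega, by omega⟩
    · dsimp only
      rw [eq1]
      exact hnz
    · dsimp only
      rw [eq1]
  · -- terms agree
    rintro ⟨⟨j, i⟩, k⟩ h1 h2
    simp only [Finset.mem_sigma, Finset.mem_product, Finset.mem_range, Finset.mem_Icc] at h1
    dsimp only
    have e : (k - j) + ((i + j) - k) = i := by omega
    rw [e]

theorem iter_sum {α : Type*} (k : ℕ) (s : Finset α) (F : α → K) :
    E.d^[k] (∑ x ∈ s, F x) = ∑ x ∈ s, E.d^[k] (F x) := by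
  classical
  induction s using Finset.induction_on with
  | empty => simp [iter_zero]
  | insert x s hx ih => rw [Finset.sum_insert hx, Finset.sum_insert hx, iter_add, ih]

theorem lhs_eq {A B C : ℤ → K} {NA NB NC : ℤ}
    (hA : OrdLE NA A) (hB : OrdLE NB B) (hC : OrdLE NC C) (r : ℤ) :
    pdoMul E.d (pdoMul E.d A B) C r
    = ∑ np ∈ Finset.Icc (r - NB - NC) NA ×ˢ Finset.Icc (r - NA - NC) NB,
        ∑ ji ∈ Finset.range ((NA + NB + NC - r).toNat + 1)
            ×ˢ Finset.range ((NA + NB + NC - r).toNat + 1),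
          ((zchoose (np.1 - ji.1 + np.2) ji.2 * zchoose np.1 ji.1 : ℤ) : K)
            * Tt E A B C r np.1 np.2 ji.1 ji.2 := by
  classical
  set J : ℕ := (NA + NB + NC - r).toNat + 1 with hJ
  have step1 : pdoMul E.d (pdoMul E.d A B) C r
      = ∑ x ∈ box (r - NC) (NA + NB) J,
          zchoose x.1 x.2 • (pdoMul E.d A B x.1 * E.d^[x.2] (C (r - x.1 + x.2))) := by
    refine pdoMul_eq_sum E (ordLE_pdoMul E hA hB) hC r ?_
    intro n j h1 h2
    rw [mem_box]
    refine ⟨by omega, by omega, by omega⟩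
  rw [step1]
  have step2 : ∀ x ∈ box (r - NC) (NA + NB) J,
      zchoose x.1 x.2 • (pdoMul E.d A B x.1 * E.d^[x.2] (C (r - x.1 + x.2)))
      = ∑ y ∈ box (r - NB - NC) NA J,
          ((zchoose x.1 x.2 * zchoose y.1 y.2 : ℤ) : K)
            * (A y.1 * E.d^[y.2] (B (x.1 - y.1 + y.2)) * E.d^[x.2] (C (r - x.1 + x.2))) := by
    intro x hx
    obtain ⟨hx1, hx2, hx3⟩ := mem_box.mp hx
    have hin : pdoMul E.d A B x.1 = ∑ y ∈ box (r - NB - NC) NA J,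
        zchoose y.1 y.2 • (A y.1 * E.d^[y.2] (B (x.1 - y.1 + y.2))) := by
      refine pdoMul_eq_sum E hA hB x.1 ?_
      intro n j h1 h2
      rw [mem_box]
      refine ⟨by omega, by omega, by omega⟩
    rw [hin, Finset.sum_mul, Finset.smul_sum]
    refine Finset.sum_congr rfl fun y _ => ?_
    push_cast [zsmul_eq_mul]
    ring
  rw [Finset.sum_congr rfl step2, ← Finset.sum_product']
  rw [← Finset.sum_product']
  refine Finset.sum_bij_ne_zero
    (fun w _ _ => ((w.2.1, w.1.1 - w.2.1 + w.2.2), (w.2.2, w.1.2))) ?_ ?_ ?_ ?_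
  · -- membership
    rintro ⟨⟨m, i⟩, ⟨n, j⟩⟩ h1 h2
    simp only [Finset.mem_product, mem_box] at h1
    obtain ⟨⟨hm1, hm2, hi⟩, hn1, hn2, hj⟩ := h1
    have hTeq : A n * E.d^[j] (B (m - n + j)) * E.d^[i] (C (r - m + i))
        = Tt E A B C r n (m - n + j) j i := by
      rw [Tt]
      congr 3
      omega
    have hT : Tt E A B C r n (m - n + j) j i ≠ 0 := by
      rw [← hTeq]
      intro hzz
      exact h2 (by dsimp only; rw [hzz, mul_zero])
    obtain ⟨ha1, ha2, ha3⟩ := T_ne_zero E hA hB hC hT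
    simp only [Finset.mem_product, Finset.mem_Icc, Finset.mem_range]
    refine ⟨⟨⟨by omega, by omega⟩, by omega, by omega⟩, by omega, by omega⟩
  · -- injectivity
    rintro ⟨⟨m1, i1⟩, ⟨n1, j1⟩⟩ h11 h12 ⟨⟨m2, i2⟩, ⟨n2, j2⟩⟩ h21 h22 heq
    simp only [Prod.mk.injEq] at heq
    obtain ⟨⟨e1, e2⟩, e3, e4⟩ := heq
    subst e1
    subst e3
    subst e4
    have : m1 = m2 := by omega
    subst this
    rfl
  · -- surjectivity
    rintro ⟨⟨n, p⟩, ⟨j, i⟩⟩ hb hnz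
    simp only [Finset.mem_product, Finset.mem_Icc, Finset.mem_range] at hb
    obtain ⟨⟨⟨hn1, hn2⟩, hp1, hp2⟩, hj, hi⟩ := hb
    have hT : Tt E A B C r n p j i ≠ 0 := fun hzz => hnz (by dsimp only; rw [hzz, mul_zero])
    obtain ⟨ha1, ha2, ha3⟩ := T_ne_zero E hA hB hC hT
    refine ⟨((n - j + p, i), (n, j)), ?_, ?_, ?_⟩
    · simp only [Finset.mem_product, mem_box]
      refine ⟨⟨by omega, by omega, by omega⟩, by omega, by omega, by omega⟩
    · dsimp only
      have e1 : n - (j:ℤ) + p - n + (j:ℕ) = p := by omega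
      have e2 : r - (n - (j:ℤ) + p) + (i:ℕ) = r - n + j - p + i := by omega
      rw [e1, e2]
      exact hnz
    · dsimp only
      have e1 : n - (j:ℤ) + p - n + (j:ℕ) = p := by omega
      rw [e1]
  · -- terms agree
    rintro ⟨⟨m, i⟩, ⟨n, j⟩⟩ h1 h2
    dsimp only
    rw [Tt]
    have e1 : m - n + (j:ℕ) = m - n + j := rfl
    have e2 : n - (j:ℕ) + (m - n + (j:ℕ)) = m := by omega
    have e3 : r - n + (j:ℕ) - (m - n + (j:ℕ)) + (i:ℕ) = r - m + i := by omega
    rw [e2, e3]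

theorem rhs_eq {A B C : ℤ → K} {NA NB NC : ℤ}
    (hA : OrdLE NA A) (hB : OrdLE NB B) (hC : OrdLE NC C) (r : ℤ) :
    pdoMul E.d A (pdoMul E.d B C) r
    = ∑ np ∈ Finset.Icc (r - NB - NC) NA ×ˢ Finset.Icc (r - NA - NC) NB,
        ∑ kq ∈ Finset.range ((NA + NB + NC - r).toNat + 1)
            ×ˢ Finset.range ((NA + NB + NC - r).toNat + 1),
          ∑ s ∈ Finset.range (kq.1 + 1),
            ((zchoose np.1 kq.1 * zchoose np.2 kq.2 * (kq.1.choose s) : ℤ) : K)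
              * Tt E A B C r np.1 np.2 s ((kq.1 - s) + kq.2) := by
  classical
  set J : ℕ := (NA + NB + NC - r).toNat + 1 with hJ
  have step1 : pdoMul E.d A (pdoMul E.d B C) r
      = ∑ y ∈ box (r - NB - NC) NA J,
          zchoose y.1 y.2 • (A y.1 * E.d^[y.2] (pdoMul E.d B C (r - y.1 + y.2))) := by
    refine pdoMul_eq_sum E hA (ordLE_pdoMul E hB hC) r ?_
    intro n j h1 h2
    rw [mem_box]
    refine ⟨by omega, by omega, by omega⟩
  rw [step1]
  have step2 : ∀ y ∈ box (r - NB - NC) NA J,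
      zchoose y.1 y.2 • (A y.1 * E.d^[y.2] (pdoMul E.d B C (r - y.1 + y.2)))
      = ∑ w ∈ box (r - NA - NC) NB J, ∑ s ∈ Finset.range (y.2 + 1),
          ((zchoose y.1 y.2 * zchoose w.1 w.2 * (y.2.choose s) : ℤ) : K)
            * (A y.1 * (E.d^[s] (B w.1)
                * E.d^[(y.2 - s) + w.2] (C (r - y.1 + y.2 - w.1 + w.2)))) := by
    rintro ⟨n, k⟩ hy
    obtain ⟨hy1, hy2, hy3⟩ := mem_box.mp hy
    have hin : pdoMul E.d B C (r - n + k) = ∑ w ∈ box (r - NA - NC) NB J,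
        zchoose w.1 w.2 • (B w.1 * E.d^[w.2] (C (r - n + k - w.1 + w.2))) := by
      refine pdoMul_eq_sum E hB hC (r - n + k) ?_
      intro p q h1 h2
      rw [mem_box]
      refine ⟨by omega, by omega, by omega⟩
    rw [hin, iter_sum, Finset.mul_sum, Finset.smul_sum]
    refine Finset.sum_congr rfl fun w _ => ?_
    rw [iter_smul, leibniz, Finset.smul_sum, Finset.mul_sum, Finset.smul_sum]
    refine Finset.sum_congr rfl fun s hs => ?_
    simp only [Finset.mem_range] at hs
    rw [← Function.iterate_add_apply]
    push_cast [zsmul_eq_mul]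
    ring
  rw [Finset.sum_congr rfl step2, ← Finset.sum_product', ← Finset.sum_product']
  refine Finset.sum_nbij' (fun w => ((w.1.1, w.2.1), (w.1.2, w.2.2)))
    (fun w => ((w.1.1, w.2.1), (w.1.2, w.2.2))) ?_ ?_ ?_ ?_ ?_
  · rintro ⟨⟨n, k⟩, ⟨p, q⟩⟩ h1
    simp only [Finset.mem_product, mem_box] at h1
    simp only [Finset.mem_product, Finset.mem_Icc, Finset.mem_range]
    refine ⟨⟨⟨by tauto, by tauto⟩, by tauto, by tauto⟩, by tauto, by tauto⟩
  · rintro ⟨⟨n, p⟩, ⟨k, q⟩⟩ h1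
    simp only [Finset.mem_product, Finset.mem_Icc, Finset.mem_range] at h1
    simp only [Finset.mem_product, mem_box]
    refine ⟨⟨by tauto, by tauto, by tauto⟩, by tauto, by tauto, by tauto⟩
  · rintro ⟨⟨n, k⟩, ⟨p, q⟩⟩ h1
    rfl
  · rintro ⟨⟨n, p⟩, ⟨k, q⟩⟩ h1
    rfl
  · rintro ⟨⟨n, k⟩, ⟨p, q⟩⟩ h1
    dsimp only
    refine Finset.sum_congr rfl fun s hs => ?_
    simp only [Finset.mem_range] at hs
    rw [Tt]
    have e1 : r - n + (s:ℕ) - p + ((k - s) + q : ℕ) = r - n + k - p + q := by omega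
    rw [e1]
    ring

theorem pdoMul_assoc {A B C : ℤ → K} {NA NB NC : ℤ}
    (hA : OrdLE NA A) (hB : OrdLE NB B) (hC : OrdLE NC C) :
    pdoMul E.d (pdoMul E.d A B) C = pdoMul E.d A (pdoMul E.d B C) := by
  funext r
  rw [lhs_eq E hA hB hC r, rhs_eq E hA hB hC r]
  refine Finset.sum_congr rfl fun np _ => ?_
  exact fiber E hA hB hC r np.1 np.2 (by omega)

def Bdd (A : ℤ → K) : Prop := ∃ N : ℤ, OrdLE N A

theorem Bdd.add {A B : ℤ → K} (hA : Bdd A) (hB : Bdd B) : Bdd (A + B) := by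
  obtain ⟨NA, hA⟩ := hA
  obtain ⟨NB, hB⟩ := hB
  exact ⟨max NA NB, fun n hn => by
    simp only [Pi.add_apply, hA n (by omega), hB n (by omega), add_zero]⟩

theorem Bdd.neg {A : ℤ → K} (hA : Bdd A) : Bdd (-A) := by
  obtain ⟨NA, hA⟩ := hA
  exact ⟨NA, fun n hn => by simp only [Pi.neg_apply, hA n hn, neg_zero]⟩

theorem Bdd.mul {A B : ℤ → K} (E : Der K) (hA : Bdd A) (hB : Bdd B) :
    Bdd (pdoMul E.d A B) := by
  obtain ⟨NA, hA⟩ := hA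
  obtain ⟨NB, hB⟩ := hB
  exact ⟨NA + NB, ordLE_pdoMul E hA hB⟩

theorem Bdd.single (n : ℤ) (a : K) : Bdd (pdoSingle n a) := ⟨n, ordLE_single n a⟩

def bddSubgroup (K : Type*) [Field K] : AddSubgroup (ℤ → K) where
  carrier := {A | Bdd A}
  add_mem' := Bdd.add
  zero_mem' := ⟨0, fun _ _ => rfl⟩
  neg_mem' := Bdd.neg

def PDO (E : Der K) : Type _ := bddSubgroup K

instance (E : Der K) : AddCommGroup (PDO E) :=
  inferInstanceAs (AddCommGroup (bddSubgroup K))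

variable {E : Der K}

instance : Ring (PDO E) where
  __ := (inferInstance : AddCommGroup (PDO E))
  mul X Y := ⟨pdoMul E.d X.1 Y.1, Bdd.mul E X.2 Y.2⟩
  one := ⟨pdoSingle 0 1, Bdd.single 0 1⟩
  mul_assoc X Y Z := by
    obtain ⟨NX, hX⟩ := X.2
    obtain ⟨NY, hY⟩ := Y.2
    obtain ⟨NZ, hZ⟩ := Z.2
    exact Subtype.ext (pdoMul_assoc E hX hY hZ)
  one_mul X := Subtype.ext (pdoMul_one_left E X.1)
  mul_one X := Subtype.ext (pdoMul_one_right E X.1)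
  left_distrib X Y Z := by
    obtain ⟨NX, hX⟩ := X.2
    obtain ⟨NY, hY⟩ := Y.2
    obtain ⟨NZ, hZ⟩ := Z.2
    exact Subtype.ext (pdoMul_add_right E hX hY hZ)
  right_distrib X Y Z := by
    obtain ⟨NX, hX⟩ := X.2
    obtain ⟨NY, hY⟩ := Y.2
    obtain ⟨NZ, hZ⟩ := Z.2
    exact Subtype.ext (pdoMul_add_left E hX hY hZ)
  zero_mul X := Subtype.ext (pdoMul_zero_left E X.1)
  mul_zero X := Subtype.ext (pdoMul_zero_right E X.1)

theorem mul_val (X Y : PDO E) : (X * Y).1 = pdoMul E.d X.1 Y.1 := rfl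
theorem add_val (X Y : PDO E) : (X + Y).1 = X.1 + Y.1 := rfl
theorem sub_val (X Y : PDO E) : (X - Y).1 = X.1 - Y.1 := rfl
theorem one_val : (1 : PDO E).1 = pdoSingle 0 1 := rfl

def md (E : Der K) (f : K) : PDO E := ⟨pdoSingle 0 f, Bdd.single 0 f⟩
def dd (E : Der K) : PDO E := ⟨pdoSingle 1 1, Bdd.single 1 1⟩
def di (E : Der K) : PDO E := ⟨pdoSingle (-1) 1, Bdd.single (-1) 1⟩

theorem md_one : md E 1 = 1 := rfl

theorem md_mul (f g : K) : md E f * md E g = md E (f * g) :=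
  Subtype.ext (single_mul_single_left E f g 0)

theorem md_add (f g : K) : md E (f + g) = md E f + md E g := by
  refine Subtype.ext (funext fun m => ?_)
  show pdoSingle 0 (f + g) m = pdoSingle 0 f m + pdoSingle 0 g m
  simp only [pdoSingle]
  split <;> simp

theorem dd_md (f : K) : dd E * md E f = md E f * dd E + md E (E.d f) := by
  refine Subtype.ext ?_
  show pdoMul E.d (pdoSingle 1 1) (pdoSingle 0 f)
    = pdoMul E.d (pdoSingle 0 f) (pdoSingle 1 1) + pdoSingle 0 (E.d f)
  rw [dop_mul_m, single_mul_single_left E f 1 1, mul_one]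

theorem dd_di : (dd E) * di E = 1 := Subtype.ext (dop_mul_dinv E)
theorem di_dd : (di E) * dd E = 1 := Subtype.ext (dinv_mul_dop E)

-- right-assoc versions
theorem m3 (Y : PDO E) : dd E * (di E * Y) = Y := by rw [← mul_assoc, dd_di, one_mul]
theorem m4 (Y : PDO E) : di E * (dd E * Y) = Y := by rw [← mul_assoc, di_dd, one_mul]
theorem m5 (f g : K) (Y : PDO E) : md E f * (md E g * Y) = md E (f * g) * Y := by
  rw [← mul_assoc, md_mul]

theorem m1' (f : K) (Y : PDO E) :
    md E f * (dd E * Y) = dd E * (md E f * Y) - md E (E.d f) * Y := by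
  have h : md E f * dd E = dd E * md E f - md E (E.d f) := by rw [dd_md]; noncomm_ring
  calc md E f * (dd E * Y) = (md E f * dd E) * Y := by noncomm_ring
    _ = (dd E * md E f - md E (E.d f)) * Y := by rw [h]
    _ = _ := by noncomm_ring

theorem m2 (f : K) (Y : PDO E) :
    di E * (md E f * Y) = md E f * (di E * Y) - di E * (md E (E.d f) * (di E * Y)) := by
  have h : di E * md E f = md E f * di E - di E * md E (E.d f) * di E := by
    have h0 : md E f * dd E = dd E * md E f - md E (E.d f) := by rw [dd_md]; noncomm_ring
    have h1 : di E * (md E f * dd E) * di E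
        = di E * (dd E * md E f - md E (E.d f)) * di E := by rw [h0]
    calc di E * md E f = di E * md E f * (dd E * di E) := by rw [dd_di, mul_one]
      _ = di E * (md E f * dd E) * di E := by noncomm_ring
      _ = di E * (dd E * md E f - md E (E.d f)) * di E := h1
      _ = (di E * dd E) * md E f * di E - di E * md E (E.d f) * di E := by noncomm_ring
      _ = md E f * di E - di E * md E (E.d f) * di E := by rw [di_dd, one_mul]
  calc di E * (md E f * Y) = (di E * md E f) * Y := by rw [mul_assoc]
    _ = (md E f * di E - di E * md E (E.d f) * di E) * Y := by rw [h]
    _ = _ := by noncomm_ring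

theorem cancel_md {f g : K} (h : f * g = 1) (Y : PDO E) :
    md E f * (md E g * Y) = Y := by
  rw [m5, h, md_one, one_mul]

section Main

/-- `B = ∂ (1/u') ∂ (1/u') ∂ (1/DL) ∂` -/
def Bop (E : Der K) (u' DL : K) : PDO E :=
  dd E * (md E u'⁻¹ * (dd E * (md E u'⁻¹ * (dd E * (md E DL⁻¹ * dd E)))))

/-- `B⁻¹ = ∂⁻¹ DL ∂⁻¹ u' ∂⁻¹ u' ∂⁻¹` -/
def Binvop (E : Der K) (u' DL : K) : PDO E :=
  di E * (md E DL * (di E * (md E u' * (di E * (md E u' * di E)))))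

/-- `H = u' ∂⁻¹ u' + a ∂⁻¹ u' ∂⁻¹ u' ∂⁻¹` -/
def Hop (E : Der K) (a u' : K) : PDO E :=
  md E u' * di E * md E u' + md E a * (di E * md E u' * di E * md E u' * di E)

/-- `A = (∂² - 2(u''/u')∂ + (u''/u')' + a)(1/DL)∂ - u'` -/
def Aop (E : Der K) (a u' DL : K) : PDO E :=
  (dd E * dd E - md E (2 * (E.d u' / u')) * dd E + md E (E.d (E.d u' / u')) + md E a)
    * md E DL⁻¹ * dd E - md E u'

variable (E : Der K) {a u' DL : K}

theorem Bop_mul_Binvop (hu' : u' ≠ 0) (hDL : DL ≠ 0) :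
    (Bop E u' DL) * (Binvop E u' DL) = 1 := by
  have f2 : u'⁻¹ * u' = 1 := inv_mul_cancel₀ hu'
  have f4 : DL⁻¹ * DL = 1 := inv_mul_cancel₀ hDL
  rw [Bop, Binvop]
  simp only [mul_assoc]
  rw [m3, cancel_md f4, m3, cancel_md f2, m3, cancel_md f2, dd_di]

theorem Binvop_mul_Bop (hu' : u' ≠ 0) (hDL : DL ≠ 0) :
    (Binvop E u' DL) * (Bop E u' DL) = 1 := by
  have f1 : u' * u'⁻¹ = 1 := mul_inv_cancel₀ hu'
  have f3 : DL * DL⁻¹ = 1 := mul_inv_cancel₀ hDL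
  rw [Bop, Binvop]
  simp only [mul_assoc]
  rw [m4, cancel_md f1, m4, cancel_md f1, m4, cancel_md f3, di_dd]

theorem Hop_mul_Bop (hu' : u' ≠ 0) (hDL : DL ≠ 0)
    (hDLeq : DL = E.d (u'⁻¹ * E.d (E.d u' / u'))) :
    (Hop E a u') * (Bop E u' DL) = Aop E a u' DL := by
  set c : K := E.d u' / u' with hc
  set c' : K := E.d c with hc'
  have f1 : u' * u'⁻¹ = 1 := mul_inv_cancel₀ hu'
  have f3 : DL * DL⁻¹ = 1 := mul_inv_cancel₀ hDL
  have g1 : E.d u' * u'⁻¹ = c := (div_eq_mul_inv (E.d u') u').symm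
  have g3 : (u' * c) * u'⁻¹ = c := by field_simp
  have g5 : E.d (c' * u'⁻¹) = DL := by rw [mul_comm, hDLeq]
  have g6 : u' * (c' * u'⁻¹ * DL⁻¹) = c' * DL⁻¹ := by field_simp
  set R2 : PDO E := dd E * (md E DL⁻¹ * dd E) with hR2
  set R1 : PDO E := dd E * (md E u'⁻¹ * R2) with hR1
  have hBop : Bop E u' DL = dd E * (md E u'⁻¹ * R1) := by rw [Bop, hR1, hR2]
  -- the key "u' ∂ (1/u') = ∂ - c" move
  have SA : ∀ Y : PDO E, md E u' * (dd E * (md E u'⁻¹ * Y)) = dd E * Y - md E c * Y := by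
    intro Y
    rw [m1', m5, m5, f1, md_one, one_mul, g1]
  -- term2
  have t2 : md E a * (di E * (md E u' * (di E * (md E u' * (di E * (Bop E u' DL))))))
      = md E a * (md E DL⁻¹ * dd E) := by
    rw [hBop, m4, cancel_md f1, hR1, m4, cancel_md f1, hR2, m4]
  -- term1
  have a1 : md E u' * Bop E u' DL = dd E * R1 - md E c * R1 := by
    rw [hBop]; exact SA R1
  have hQR1 : di E * R1 = md E u'⁻¹ * R2 := by rw [hR1, m4]
  have a2 : di E * (md E u' * Bop E u' DL)
      = R1 - md E c * (md E u'⁻¹ * R2) + di E * (md E c' * (md E u'⁻¹ * R2)) := by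
    rw [a1, mul_sub, hR1, m4, ← hR1, m2, hQR1, ← hc']
    noncomm_ring
  have X3 : md E c' * (md E u'⁻¹ * R2)
      = dd E * (md E (c' * u'⁻¹ * DL⁻¹) * dd E) - dd E := by
    rw [m5, hR2, m1', m5, g5, m5, f3, md_one, one_mul]
  have a3 : md E u' * (di E * (md E u' * Bop E u' DL))
      = dd E * R2 - md E c * R2 - md E c * R2 + md E (c' * DL⁻¹) * dd E - md E u' := by
    rw [a2]
    have e1 : md E u' * R1 = dd E * R2 - md E c * R2 := by rw [hR1]; exact SA R2
    have e2 : md E u' * (md E c * (md E u'⁻¹ * R2)) = md E c * R2 := by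
      rw [m5, m5, g3]
    have e3 : di E * (md E c' * (md E u'⁻¹ * R2))
        = di E * (dd E * (md E (c' * u'⁻¹ * DL⁻¹) * dd E)) - di E * dd E := by
      rw [X3, mul_sub]
    have e4 : md E u' * (di E * (md E c' * (md E u'⁻¹ * R2)))
        = md E (c' * DL⁻¹) * dd E - md E u' := by
      rw [e3, m4, di_dd, mul_sub, mul_one, m5, g6]
    rw [mul_add, mul_sub, e1, e2, e4]
    noncomm_ring
  -- assemble
  have hsplit : (Hop E a u') * (Bop E u' DL)
      = md E u' * (di E * (md E u' * Bop E u' DL))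
        + md E a * (di E * (md E u' * (di E * (md E u' * (di E * (Bop E u' DL)))))) := by
    rw [Hop]
    noncomm_ring
  rw [hsplit, a3, t2, Aop, ← hc, ← hc']
  have e5 : md E (2 * c) = md E c + md E c := by rw [two_mul, md_add]
  have e6 : md E (c' * DL⁻¹) * dd E = md E c' * (md E DL⁻¹ * dd E) := by rw [m5]
  rw [e5, e6, hR2]
  noncomm_ring

end Main

end Pdo18

/-- Minimal fractional decomposition of the Krichever–Novikov type non-local structure:
over the (localized) algebra of differential functions in `u`, the rational
pseudodifferential operator `H = u'∂⁻¹∘u' + a·∂⁻¹∘u'∂⁻¹∘u'∂⁻¹` equals `A ∘ B⁻¹`, where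
`A = (∂² − 2(u''/u')∂ + (u''/u')' + a) ∘ (1/D(u')) ∘ ∂ − u'`,
`B = ∂∘(1/u')∘∂∘(1/u')∘∂∘(1/D(u'))∘∂`, and `D(u') = ((1/u')(u''/u')')'`. -/
theorem stmt18 (d : K → K)
    (hd_add : ∀ a b : K, d (a + b) = d a + d b)
    (hd_mul : ∀ a b : K, d (a * b) = d a * b + a * d b)
    (a u' : K) (ha : d a = 0) (hu' : u' ≠ 0)
    (hDL : d (u'⁻¹ * d (d u' / u')) ≠ 0) :
    let u'' : K := d u'
    let DL : K := d (u'⁻¹ * d (u'' / u'))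
    let Dop : ℤ → K := pdoSingle 1 1
    let Dinv : ℤ → K := pdoSingle (-1) 1
    let M : K → ℤ → K := pdoSingle 0
    let H : ℤ → K :=
      pdoMul d (pdoMul d (M u') Dinv) (M u')
        + a • pdoMul d (pdoMul d (pdoMul d (pdoMul d Dinv (M u')) Dinv) (M u')) Dinv
    let A : ℤ → K :=
      pdoMul d (pdoMul d
        (pdoMul d Dop Dop - pdoMul d (M (2 * (u'' / u'))) Dop + M (d (u'' / u')) + M a)
        (M DL⁻¹)) Dop - M u'
    let B : ℤ → K :=
      pdoMul d Dop (pdoMul d (M u'⁻¹) (pdoMul d Dop (pdoMul d (M u'⁻¹)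
        (pdoMul d Dop (pdoMul d (M DL⁻¹) Dop)))))
    ∃ Binv : ℤ → K,
      pdoMul d B Binv = pdoSingle 0 1 ∧
      pdoMul d Binv B = pdoSingle 0 1 ∧
      H = pdoMul d A Binv := by
  intro u'' DL Dop Dinv M H A B
  classical
  let E : Pdo18.Der K := ⟨d, hd_add, hd_mul⟩
  have hDL' : DL ≠ 0 := hDL
  have hB : (Pdo18.Bop E u' DL) * (Pdo18.Binvop E u' DL) = 1 :=
    Pdo18.Bop_mul_Binvop E hu' hDL'
  have hB' : (Pdo18.Binvop E u' DL) * (Pdo18.Bop E u' DL) = 1 :=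
    Pdo18.Binvop_mul_Bop E hu' hDL'
  have hHB : (Pdo18.Hop E a u') * (Pdo18.Bop E u' DL) = Pdo18.Aop E a u' DL :=
    Pdo18.Hop_mul_Bop E hu' hDL' rfl
  have hfin : Pdo18.Hop E a u' = Pdo18.Aop E a u' DL * Pdo18.Binvop E u' DL := by
    rw [← hHB, mul_assoc, hB, mul_one]
  refine ⟨(Pdo18.Binvop E u' DL).1, ?_, ?_, ?_⟩
  · exact congrArg Subtype.val hB
  · exact congrArg Subtype.val hB'
  · show pdoMul d (pdoMul d (M u') Dinv) (M u')
        + a • pdoMul d (pdoMul d (pdoMul d (pdoMul d Dinv (M u')) Dinv) (M u')) Dinv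
      = pdoMul d A (Pdo18.Binvop E u' DL).1
    rw [← Pdo18.pdoMul_smul_left E a
      (pdoMul d (pdoMul d (pdoMul d (pdoMul d Dinv (M u')) Dinv) (M u')) Dinv)]
    exact congrArg Subtype.val hfin

end
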